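/- Let R ∈ ℝ^{m×m} be symmetric positive definite, E ∈ ℝ^{m×m} symmetric positive semidefinite, and G ∈ ℝ^{m×n}. Let ε satisfy 0 ≤ ε ≤ λ1(R)/2, and let Ê ∈ ℝ^{m×m} be symmetric with ‖Ê − E‖ ≤ ε and Ĝ ∈ ℝ^{m×n} with ‖Ĝ − G‖ ≤ ε. Then R + E and R + Ê are invertible and ‖(R + Ê)^{-1} Ĝ − (R + E)^{-1} G‖ ≤ ε ( 2‖G‖/λ1(R)² + 2/λ1(R) ). -/

import Mathlib

open Matrix

noncomputable section

/-- spectral (operator 2-) norm of a real matrix -/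
def spNorm {p q : ℕ} (M : Matrix (Fin p) (Fin q) ℝ) : ℝ :=
  ‖(Matrix.toEuclideanLin M).toContinuousLinearMap‖

/-- smallest eigenvalue (as infimum of the real spectrum) -/
def lam1 {p : ℕ} (M : Matrix (Fin p) (Fin p) ℝ) : ℝ :=
  sInf (spectrum ℝ M)

namespace GNAux

/-- the continuous linear map associated to a matrix -/
noncomputable def T {p q : ℕ} (M : Matrix (Fin p) (Fin q) ℝ) :
    EuclideanSpace ℝ (Fin q) →L[ℝ] EuclideanSpace ℝ (Fin p) :=
  (Matrix.toEuclideanLin M).toContinuousLinearMap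

variable {p q r : ℕ}

lemma spNorm_eq (M : Matrix (Fin p) (Fin q) ℝ) : spNorm M = ‖T M‖ := rfl

lemma spNorm_nonneg (M : Matrix (Fin p) (Fin q) ℝ) : 0 ≤ spNorm M := norm_nonneg _

lemma T_apply (M : Matrix (Fin p) (Fin q) ℝ) (x : EuclideanSpace ℝ (Fin q)) :
    T M x = Matrix.toEuclideanLin M x := rfl

lemma T_add (A B : Matrix (Fin p) (Fin q) ℝ) : T (A + B) = T A + T B := by
  unfold T; rw [map_add, map_add]

lemma T_sub (A B : Matrix (Fin p) (Fin q) ℝ) : T (A - B) = T A - T B := by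
  unfold T; rw [map_sub, map_sub]

lemma T_neg (A : Matrix (Fin p) (Fin q) ℝ) : T (-A) = -T A := by
  unfold T; rw [map_neg, map_neg]

lemma T_mul (A : Matrix (Fin p) (Fin q) ℝ) (B : Matrix (Fin q) (Fin r) ℝ) :
    T (A * B) = (T A).comp (T B) := by
  refine ContinuousLinearMap.ext fun x => ?_
  show Matrix.toEuclideanLin (A * B) x = Matrix.toEuclideanLin A (Matrix.toEuclideanLin B x)
  simp [Matrix.toEuclideanLin_apply, Matrix.mulVec_mulVec]

lemma T_one (x : EuclideanSpace ℝ (Fin p)) : T (1 : Matrix (Fin p) (Fin p) ℝ) x = x := by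
  show Matrix.toEuclideanLin (1 : Matrix (Fin p) (Fin p) ℝ) x = x
  apply (WithLp.equiv 2 _).injective
  simp [Matrix.toEuclideanLin_apply]

lemma spNorm_add_le (A B : Matrix (Fin p) (Fin q) ℝ) :
    spNorm (A + B) ≤ spNorm A + spNorm B := by
  rw [spNorm_eq, spNorm_eq, spNorm_eq, T_add]; exact norm_add_le _ _

lemma spNorm_neg (A : Matrix (Fin p) (Fin q) ℝ) : spNorm (-A) = spNorm A := by
  rw [spNorm_eq, spNorm_eq, T_neg, norm_neg]

lemma spNorm_mul_le (A : Matrix (Fin p) (Fin q) ℝ) (B : Matrix (Fin q) (Fin r) ℝ) :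
    spNorm (A * B) ≤ spNorm A * spNorm B := by
  rw [spNorm_eq, spNorm_eq, spNorm_eq, T_mul]
  exact ContinuousLinearMap.opNorm_comp_le _ _

lemma inner_T (M : Matrix (Fin p) (Fin p) ℝ) (x : EuclideanSpace ℝ (Fin p)) :
    (inner ℝ x (T M x) : ℝ) =
      dotProduct (WithLp.equiv 2 _ x) (M *ᵥ (WithLp.equiv 2 _ x)) := by
  rw [T_apply]
  simp [PiLp.inner_apply, RCLike.inner_apply, Matrix.toEuclideanLin_apply, dotProduct, mul_comm]

lemma lam1_le_eigenvalues {M : Matrix (Fin p) (Fin p) ℝ} (hM : M.IsHermitian) (i : Fin p) :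
    lam1 M ≤ hM.eigenvalues i :=
  csInf_le (M.finite_spectrum.bddBelow) (hM.eigenvalues_mem_spectrum_real i)

lemma quad_lower {M : Matrix (Fin p) (Fin p) ℝ} (hM : M.IsHermitian)
    (x : EuclideanSpace ℝ (Fin p)) :
    lam1 M * ‖x‖ ^ 2 ≤ inner ℝ x (T M x) := by
  classical
  set b := hM.eigenvectorBasis with hb_def
  have hsym : (Matrix.toEuclideanLin M).IsSymmetric :=
    (Matrix.isHermitian_iff_isSymmetric).1 hM
  have hb : ∀ i, Matrix.toEuclideanLin M (b i) = hM.eigenvalues i • b i := by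
    intro i
    apply (WithLp.equiv 2 _).injective
    have h := hM.mulVec_eigenvectorBasis i
    simpa [Matrix.toEuclideanLin_apply] using h
  have hrep : ∀ i, b.repr (T M x) i = hM.eigenvalues i * b.repr x i := by
    intro i
    rw [b.repr_apply_apply, b.repr_apply_apply, T_apply, ← hsym (b i) x, hb i,
      real_inner_smul_left]
  have hx2 : (inner ℝ x (T M x) : ℝ) = ∑ i, hM.eigenvalues i * (b.repr x i) ^ 2 := by
    rw [← b.repr.inner_map_map x (T M x)]
    rw [PiLp.inner_apply]
    refine Finset.sum_congr rfl fun i _ => ?_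
    rw [hrep i]
    simp [RCLike.inner_apply]
    ring
  have hnx : ‖x‖ ^ 2 = ∑ i, (b.repr x i) ^ 2 := by
    rw [← b.repr.norm_map x, ← real_inner_self_eq_norm_sq, PiLp.inner_apply]
    refine Finset.sum_congr rfl fun i _ => ?_
    simp [RCLike.inner_apply]
  rw [hx2, hnx, Finset.mul_sum]
  refine Finset.sum_le_sum fun i _ => ?_
  exact mul_le_mul_of_nonneg_right (lam1_le_eigenvalues hM i) (sq_nonneg _)

lemma quad_abs_le (M : Matrix (Fin p) (Fin p) ℝ) (x : EuclideanSpace ℝ (Fin p)) :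
    |(inner ℝ x (T M x) : ℝ)| ≤ spNorm M * ‖x‖ ^ 2 := by
  calc |(inner ℝ x (T M x) : ℝ)| ≤ ‖x‖ * ‖T M x‖ := abs_real_inner_le_norm _ _
    _ ≤ ‖x‖ * (‖T M‖ * ‖x‖) := by
        exact mul_le_mul_of_nonneg_left ((T M).le_opNorm x) (norm_nonneg _)
    _ = spNorm M * ‖x‖ ^ 2 := by rw [spNorm_eq]; ring

lemma main_aux {P : Matrix (Fin p) (Fin p) ℝ} (hP : P.IsHermitian) {c : ℝ} (hc : 0 < c)
    (hq : ∀ x : EuclideanSpace ℝ (Fin p), c * ‖x‖ ^ 2 ≤ inner ℝ x (T P x)) :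
    IsUnit P ∧ spNorm P⁻¹ ≤ 1 / c := by
  have hpos : P.PosDef := by
    refine Matrix.PosDef.of_dotProduct_mulVec_pos hP fun v hv => ?_
    set x : EuclideanSpace ℝ (Fin p) := (WithLp.equiv 2 _).symm v with hx_def
    have hxne : x ≠ 0 := by
      simpa [hx_def] using hv
    have h1 := hq x
    rw [inner_T] at h1
    have h2 : (WithLp.equiv 2 _) x = v := by simp [hx_def]
    rw [h2] at h1
    have h3 : 0 < ‖x‖ ^ 2 := pow_pos (norm_pos_iff.2 hxne) 2
    have : (0 : ℝ) < dotProduct v (P *ᵥ v) := lt_of_lt_of_le (by positivity) h1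
    simpa using this
  have hunit := hpos.isUnit
  refine ⟨hunit, ?_⟩
  have hlow : ∀ x : EuclideanSpace ℝ (Fin p), c * ‖x‖ ≤ ‖T P x‖ := by
    intro x
    rcases eq_or_ne x 0 with rfl | hx
    · simp
    · have h1 := hq x
      have h2 : (inner ℝ x (T P x) : ℝ) ≤ ‖x‖ * ‖T P x‖ := real_inner_le_norm _ _
      have hxn : 0 < ‖x‖ := norm_pos_iff.2 hx
      nlinarith
  have hdet : IsUnit P.det := (Matrix.isUnit_iff_isUnit_det P).mp hunit
  have hPP : P * P⁻¹ = 1 := Matrix.mul_nonsing_inv P hdet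
  rw [spNorm_eq]
  refine ContinuousLinearMap.opNorm_le_bound _ (by positivity) fun y => ?_
  have h1 : T P (T P⁻¹ y) = y := by
    rw [← ContinuousLinearMap.comp_apply, ← T_mul, hPP, T_one]
  have h2 := hlow (T P⁻¹ y)
  rw [h1] at h2
  rw [div_mul_eq_mul_div, le_div_iff₀ hc, one_mul]
  linarith [h2]

end GNAux

open GNAux

/-- Perturbation bound for the Gauss–Newton direction `(R + E)⁻¹ G`. -/
theorem gn_direction_perturbation_bound
    {m n : ℕ}
    (R : Matrix (Fin m) (Fin m) ℝ) (hR : R.PosDef)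
    (E : Matrix (Fin m) (Fin m) ℝ) (hE : E.PosSemidef)
    (G : Matrix (Fin m) (Fin n) ℝ)
    (ε : ℝ) (hε0 : 0 ≤ ε) (hε1 : ε ≤ lam1 R / 2)
    (Ehat : Matrix (Fin m) (Fin m) ℝ) (hEhatsymm : Ehat.IsSymm)
    (hEhat : spNorm (Ehat - E) ≤ ε)
    (Ghat : Matrix (Fin m) (Fin n) ℝ) (hGhat : spNorm (Ghat - G) ≤ ε) :
    IsUnit (R + E) ∧ IsUnit (R + Ehat) ∧
    spNorm ((R + Ehat)⁻¹ * Ghat - (R + E)⁻¹ * G) ≤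
      ε * (2 * spNorm G / (lam1 R) ^ 2 + 2 / lam1 R) := by
  classical
  rcases Nat.eq_zero_or_pos m with hm | hm
  · -- degenerate case `m = 0`
    subst hm
    haveI : Subsingleton (Matrix (Fin 0) (Fin 0) ℝ) :=
      ⟨fun A B => by ext i; exact absurd i.2 (by omega)⟩
    have hlam : lam1 R = 0 := by
      have : spectrum ℝ R = Set.range hR.1.eigenvalues := hR.1.spectrum_real_eq_range_eigenvalues
      rw [lam1, this, Set.range_eq_empty, Real.sInf_empty]
    have hε : ε = 0 := le_antisymm (by rw [hlam] at hε1; linarith) hε0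
    have hsp : ∀ (X : Matrix (Fin 0) (Fin n) ℝ), spNorm X = 0 := by
      intro X
      have : T X = 0 := by
        refine ContinuousLinearMap.ext fun x => ?_
        apply (WithLp.equiv 2 _).injective
        funext i
        exact absurd i.2 (by omega)
      rw [spNorm_eq, this, norm_zero]
    refine ⟨isUnit_of_subsingleton _, isUnit_of_subsingleton _, ?_⟩
    rw [hsp, hε, hlam]
    norm_num
  · -- main case `0 < m`
    haveI : Nonempty (Fin m) := ⟨⟨0, hm⟩⟩
    set lam := lam1 R with hlam_def
    have hAh : (R + E).IsHermitian := hR.1.add hE.1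
    have hEhatH : Ehat.IsHermitian := by
      rw [Matrix.IsHermitian, Matrix.conjTranspose_eq_transpose_of_trivial]
      exact hEhatsymm
    have hBh : (R + Ehat).IsHermitian := hR.1.add hEhatH
    -- positivity of lam
    have hlampos : 0 < lam := by
      have hspec : spectrum ℝ R = Set.range hR.1.eigenvalues := hR.1.spectrum_real_eq_range_eigenvalues
      have hne : (spectrum ℝ R).Nonempty := by
        rw [hspec]; exact Set.range_nonempty _
      have hmem : lam1 R ∈ spectrum ℝ R :=
        Set.Nonempty.csInf_mem hne R.finite_spectrum
      rw [hspec] at hmem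
      obtain ⟨i, hi⟩ := hmem
      rw [hlam_def, ← hi]
      exact hR.eigenvalues_pos i
    -- quadratic lower bound for R + E
    have hqA : ∀ x : EuclideanSpace ℝ (Fin m), lam * ‖x‖ ^ 2 ≤ inner ℝ x (T (R + E) x) := by
      intro x
      have h1 := quad_lower hR.1 x
      have h2 : (0 : ℝ) ≤ inner ℝ x (T E x) := by
        rw [inner_T]
        simpa using hE.dotProduct_mulVec_nonneg ((WithLp.equiv 2 _) x)
      rw [T_add]
      rw [ContinuousLinearMap.add_apply, inner_add_right]
      linarith
    -- quadratic lower bound for R + Ehat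
    have hqB : ∀ x : EuclideanSpace ℝ (Fin m), lam / 2 * ‖x‖ ^ 2 ≤ inner ℝ x (T (R + Ehat) x) := by
      intro x
      have hsplit : R + Ehat = (R + E) + (Ehat - E) := by abel
      have h1 := hqA x
      have h2 := quad_abs_le (Ehat - E) x
      have h3 : -(ε * ‖x‖ ^ 2) ≤ inner ℝ x (T (Ehat - E) x) := by
        have := neg_abs_le (inner ℝ x (T (Ehat - E) x) : ℝ)
        have h4 : spNorm (Ehat - E) * ‖x‖ ^ 2 ≤ ε * ‖x‖ ^ 2 :=
          mul_le_mul_of_nonneg_right hEhat (sq_nonneg _)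
        linarith
      rw [hsplit, T_add, ContinuousLinearMap.add_apply, inner_add_right]
      have h5 : ε ≤ lam / 2 := hε1
      nlinarith [sq_nonneg ‖x‖]
    obtain ⟨hAunit, hAinv⟩ := main_aux hAh hlampos hqA
    obtain ⟨hBunit, hBinv⟩ := main_aux hBh (by linarith : (0:ℝ) < lam / 2) hqB
    have hBinv' : spNorm (R + Ehat)⁻¹ ≤ 2 / lam := by
      rwa [one_div_div] at hBinv
    refine ⟨hAunit, hBunit, ?_⟩
    set A := R + E with hA_def
    set B := R + Ehat with hB_def
    have hdetA : IsUnit A.det := (Matrix.isUnit_iff_isUnit_det A).mp hAunit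
    have hdetB : IsUnit B.det := (Matrix.isUnit_iff_isUnit_det B).mp hBunit
    have hId : B⁻¹ * Ghat - A⁻¹ * G = B⁻¹ * (Ghat - G) + B⁻¹ * ((A - B) * (A⁻¹ * G)) := by
      have hA1 : A * (A⁻¹ * G) = G := by
        rw [← Matrix.mul_assoc, Matrix.mul_nonsing_inv A hdetA, Matrix.one_mul]
      have hB1 : B⁻¹ * (B * (A⁻¹ * G)) = A⁻¹ * G := by
        rw [← Matrix.mul_assoc, Matrix.nonsing_inv_mul B hdetB, Matrix.one_mul]
      rw [Matrix.sub_mul, hA1, Matrix.mul_sub, Matrix.mul_sub, hB1]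
      abel
    have hAB : spNorm (A - B) ≤ ε := by
      have : A - B = -(Ehat - E) := by rw [hA_def, hB_def]; abel
      rw [this, spNorm_neg]
      exact hEhat
    have s1 : spNorm (B⁻¹ * (Ghat - G)) ≤ 2 / lam * ε := by
      calc spNorm (B⁻¹ * (Ghat - G)) ≤ spNorm B⁻¹ * spNorm (Ghat - G) := spNorm_mul_le _ _
        _ ≤ 2 / lam * ε :=
          mul_le_mul hBinv' hGhat (spNorm_nonneg _) (by positivity)
    have s2 : spNorm ((A - B) * (A⁻¹ * G)) ≤ ε * (1 / lam * spNorm G) := by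
      calc spNorm ((A - B) * (A⁻¹ * G)) ≤ spNorm (A - B) * spNorm (A⁻¹ * G) := spNorm_mul_le _ _
        _ ≤ ε * (1 / lam * spNorm G) := by
            refine mul_le_mul hAB ?_ (spNorm_nonneg _) hε0
            calc spNorm (A⁻¹ * G) ≤ spNorm A⁻¹ * spNorm G := spNorm_mul_le _ _
              _ ≤ 1 / lam * spNorm G :=
                mul_le_mul_of_nonneg_right hAinv (spNorm_nonneg _)
    have s3 : spNorm (B⁻¹ * ((A - B) * (A⁻¹ * G))) ≤ 2 / lam * (ε * (1 / lam * spNorm G)) := by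
      calc spNorm (B⁻¹ * ((A - B) * (A⁻¹ * G)))
          ≤ spNorm B⁻¹ * spNorm ((A - B) * (A⁻¹ * G)) := spNorm_mul_le _ _
        _ ≤ 2 / lam * (ε * (1 / lam * spNorm G)) :=
          mul_le_mul hBinv' s2 (spNorm_nonneg _) (by positivity)
    calc spNorm (B⁻¹ * Ghat - A⁻¹ * G)
        ≤ spNorm (B⁻¹ * (Ghat - G)) + spNorm (B⁻¹ * ((A - B) * (A⁻¹ * G))) := by
          rw [hId]; exact spNorm_add_le _ _
      _ ≤ 2 / lam * ε + 2 / lam * (ε * (1 / lam * spNorm G)) := add_le_add s1 s3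
      _ = ε * (2 * spNorm G / lam ^ 2 + 2 / lam) := by
          field_simp
          ring
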